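/- For every bounded measurable function a : [0,1]×ℝ → ℝ, the series ∑_{n=1}^∞ ‖a^{⊗n} ϱ_n‖_{L²([0,1]^n × ℝ^n)}² converges, where a^{⊗n}(t,x) := a(t_1,x_1) ⋯ a(t_n,x_n). In particular, for every β ≥ 0, ∑_{n=1}^∞ β^{2n} ‖ϱ_n‖_{L²}² < ∞. -/

import Mathlib

open MeasureTheory ProbabilityTheory Filter Topology

noncomputable section

open Classical in
/-- Real-valued indicator of a proposition. -/
def indi (p : Prop) : ℝ := if p then 1 else 0

/-- The previous value `t (j-1)`, with the convention `t 0 = 0` (zero for the first index). -/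
def prev {α : Type*} [Zero α] {n : ℕ} (t : Fin n → α) (j : Fin n) : α :=
  if _h : j.1 = 0 then 0 else t ⟨j.1 - 1, Nat.lt_of_le_of_lt (Nat.sub_le _ _) j.2⟩

/-- `S` is a simple symmetric random walk on `ℤ` under `P`: `S n = ξ 1 + ⋯ + ξ n` for an
i.i.d. family `ξ` of Rademacher (±1, probability 1/2 each) steps. -/
def IsSSRW {Ω : Type*} [MeasurableSpace Ω] (P : Measure Ω) (S : ℕ → Ω → ℤ) : Prop :=
  ∃ ξ : ℕ → Ω → ℤ,
    iIndepFun ξ P ∧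
    (∀ i, Measurable (ξ i)) ∧
    (∀ i, P {a | ξ i a = 1} = 1/2 ∧ P {a | ξ i a = -1} = 1/2) ∧
    (∀ n a, S n a = ∑ i ∈ Finset.Icc 1 n, ξ i a)

/-- `ω` is an i.i.d. field of Rademacher random variables indexed by `ℕ × ℤ` under `P`. -/
def IsRademacher {Ω : Type*} [MeasurableSpace Ω] (P : Measure Ω) (ω : ℕ × ℤ → Ω → ℝ) : Prop :=
  iIndepFun ω P ∧
  (∀ p, Measurable (ω p)) ∧
  (∀ p, P {a | ω p a = 1} = 1/2 ∧ P {a | ω p a = -1} = 1/2)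

/-- The partition function `𝔷_N(A) = E[∏_{n=1}^N (1 + A(n,S_n) ω(n,S_n)) | ω]`,
the conditional expectation being taken with respect to the σ-algebra generated by `ω`. -/
def partitionFn {Ω : Type*} [MeasurableSpace Ω] (P : Measure Ω)
    (S : ℕ → Ω → ℤ) (ω : ℕ × ℤ → Ω → ℝ) (N : ℕ) (A : ℕ × ℤ → ℝ) : Ω → ℝ :=
  P[fun a => ∏ n ∈ Finset.Icc 1 N, (1 + A (n, S n a) * ω (n, S n a) a) |
    MeasurableSpace.comap (fun a => fun p => ω p a) inferInstance]

/-- The time coordinate `i` of `[t,x]_N`: the unique `i` with `t ∈ ((i-1)/N, i/N]`. -/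
def gridTime (N : ℕ) (t : ℝ) : ℕ := ⌈(N : ℝ) * t⌉₊

/-- The space coordinate `z` of `[t,x]_N`: the unique `z` of the same parity as the time
coordinate `i` with `x ∈ ((z-1)/√N, (z+1)/√N]`. -/
def gridSpace (N : ℕ) (t x : ℝ) : ℤ :=
  (gridTime N t : ℤ) + 2 * ⌈(Real.sqrt N * x - 1 - ((gridTime N t : ℤ) : ℝ)) / 2⌉

/-- The standard Gaussian heat kernel `ϱ(t,x) = e^{-x²/(2t)} / √(2πt)`. -/
def heatK (t x : ℝ) : ℝ := Real.exp (-(x ^ 2) / (2 * t)) / Real.sqrt (2 * Real.pi * t)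

/-- `ϱ_n(t,x) = ∏_j ϱ(t_j - t_{j-1}, x_j - x_{j-1})` on the simplex `Δ_n × ℝ^n`,
zero outside. -/
def rhoN (n : ℕ) (q : (Fin n → ℝ) × (Fin n → ℝ)) : ℝ :=
  indi ((∀ j, 0 < q.1 j ∧ q.1 j ≤ 1) ∧ StrictMono q.1) *
    ∏ j, heatK (q.1 j - prev q.1 j) (q.2 j - prev q.2 j)

/-- The average of `g` over the rectangle `((i-1)/N, i/N] × ((z-1)/√N, (z+1)/√N]`
(coordinatewise), whose Lebesgue measure is `2^n N^{-3n/2}`; this is the value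
`ḡ_N(i/N, z/√N)`. -/
def rectAvg (n : ℕ) (g : (Fin n → ℝ) × (Fin n → ℝ) → ℝ) (N : ℕ)
    (i : Fin n → ℕ) (z : Fin n → ℤ) : ℝ :=
  ((N : ℝ) ^ ((3 * (n : ℝ)) / 2) / 2 ^ n) *
    ∫ q in (Set.univ.pi fun j => Set.Ioc (((i j : ℝ) - 1) / N) ((i j : ℝ) / N)) ×ˢ
        (Set.univ.pi fun j =>
          Set.Ioc (((z j : ℝ) - 1) / Real.sqrt N) (((z j : ℝ) + 1) / Real.sqrt N)),
      g q

/-- The weighted U-statistic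
`S^N_n(g) = 2^{n/2} ∑_{i ∈ E^N_n} ∑_{z ∈ ℤ^n, i ↔ z} ḡ_N(i/N, z/√N) A(i,z) ω(i,z)`. -/
def Ustat {Ω : Type*} (ω : ℕ × ℤ → Ω → ℝ) (A : ℕ × ℤ → ℝ) (n N : ℕ)
    (g : (Fin n → ℝ) × (Fin n → ℝ) → ℝ) (a : Ω) : ℝ :=
  2 ^ ((n : ℝ) / 2) *
    ∑' i : Fin n → ℕ, ∑' z : Fin n → ℤ,
      indi ((∀ j, 1 ≤ i j ∧ i j ≤ N) ∧ Function.Injective i ∧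
            ∀ j, (i j : ℤ) % 2 = z j % 2) *
        (rectAvg n g N i z * (∏ j, A (i j, z j)) * ∏ j, ω (i j, z j) a)

/-- Order-1 rectangle average: the value `ḡ_N(i/N, z/√N)`. -/
def rectAvg1 (g : ℝ × ℝ → ℝ) (N : ℕ) (i : ℕ) (z : ℤ) : ℝ :=
  ((N : ℝ) ^ ((3 : ℝ) / 2) / 2) *
    ∫ q in Set.Ioc (((i : ℝ) - 1) / N) ((i : ℝ) / N) ×ˢ
        Set.Ioc (((z : ℝ) - 1) / Real.sqrt N) (((z : ℝ) + 1) / Real.sqrt N),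
      g q

/-- The order-1 U-statistic `S^N_1(g) = √2 ∑_{i=1}^N ∑_{z ≡ i (2)} ḡ_N(i/N,z/√N) A(i,z) ω(i,z)`. -/
def Ustat1 {Ω : Type*} (ω : ℕ × ℤ → Ω → ℝ) (A : ℕ × ℤ → ℝ) (N : ℕ)
    (g : ℝ × ℝ → ℝ) (a : Ω) : ℝ :=
  Real.sqrt 2 * ∑ i ∈ Finset.Icc 1 N, ∑' z : ℤ,
    indi ((i : ℤ) % 2 = z % 2) * (rectAvg1 g N i z * A (i, z) * ω (i, z) a)

/-- `p^N_n(t,x) = 2^{-n} p_n([t,x]_N) 1{⌈Nt⌉ ∈ D^N_n}`, built from the one-step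
transition probabilities `p` of the walk. -/
def pNn (p : ℕ → ℤ → ℝ) (n N : ℕ) (q : (Fin n → ℝ) × (Fin n → ℝ)) : ℝ :=
  (2 : ℝ)⁻¹ ^ n *
    indi ((∀ j, 1 ≤ gridTime N (q.1 j) ∧ gridTime N (q.1 j) ≤ N) ∧
          StrictMono fun j => gridTime N (q.1 j)) *
    ∏ j, p (gridTime N (q.1 j) - prev (fun j' => gridTime N (q.1 j')) j)
        (gridSpace N (q.1 j) (q.2 j) - prev (fun j' => gridSpace N (q.1 j') (q.2 j')) j)

end
noncomputable section Statement7Aux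

open MeasureTheory Real Set ENNReal

lemma indi_nonneg (p : Prop) : 0 ≤ indi p := by
  unfold indi; split <;> norm_num

lemma heatK_nonneg (s y : ℝ) : 0 ≤ heatK s y :=
  div_nonneg (Real.exp_pos _).le (Real.sqrt_nonneg _)

lemma measurable_heatK_comp {α : Type*} [MeasurableSpace α] {f g : α → ℝ}
    (hf : Measurable f) (hg : Measurable g) :
    Measurable fun a => heatK (f a) (g a) := by
  unfold heatK
  exact ((hg.pow_const 2).neg.div (measurable_const.mul hf)).exp.div
    ((measurable_const.mul hf).sqrt)

lemma measurable_sub_prev {n : ℕ} (j : Fin n) :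
    Measurable fun t : Fin n → ℝ => t j - prev t j := by
  refine (measurable_pi_apply j).sub ?_
  by_cases h : j.1 = 0
  · simp only [prev, dif_pos h]; exact measurable_const
  · simp only [prev, dif_neg h]; exact measurable_pi_apply _

lemma sum_sub_prev_le {n : ℕ} (t : Fin n → ℝ) (ht : ∀ j, t j ≤ 1) :
    ∑ j, (t j - prev t j) ≤ 1 := by
  rcases Nat.eq_zero_or_pos n with hn | hn
  · subst hn; simp
  · set T : ℕ → ℝ := fun i => if h : 0 < i ∧ i ≤ n then t ⟨i - 1, by omega⟩ else 0 with hT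
    have key : ∑ j : Fin n, (t j - prev t j) = ∑ i ∈ Finset.range n, (T (i + 1) - T i) := by
      rw [← Fin.sum_univ_eq_sum_range (fun i => T (i + 1) - T i) n]
      refine Finset.sum_congr rfl fun j _ => ?_
      have h1 : T (j.1 + 1) = t j := by
        have hc : 0 < j.1 + 1 ∧ j.1 + 1 ≤ n := ⟨Nat.succ_pos _, j.2⟩
        simp only [hT]
        rw [dif_pos hc]
        congr 1
      have h2 : T j.1 = prev t j := by
        by_cases h : j.1 = 0
        · simp only [hT]
          rw [dif_neg (by omega : ¬(0 < j.1 ∧ j.1 ≤ n))]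
          simp only [prev]
          rw [dif_pos h]
        · have hc : 0 < j.1 ∧ j.1 ≤ n := ⟨Nat.pos_of_ne_zero h, j.2.le⟩
          simp only [hT, prev]
          rw [dif_pos hc, dif_neg h]
      rw [h1, h2]
    rw [key, Finset.sum_range_sub]
    have hT0 : T 0 = 0 := by simp [hT]
    have hTn : T n = t ⟨n - 1, by omega⟩ := by
      simp only [hT]
      rw [dif_pos (show 0 < n ∧ n ≤ n from ⟨hn, le_rfl⟩)]
    rw [hT0, hTn, sub_zero]
    exact ht _

lemma measurableSet_simplex (n : ℕ) :
    MeasurableSet {t : Fin n → ℝ | (∀ j, 0 < t j ∧ t j ≤ 1) ∧ StrictMono t} := by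
  have hEq : {t : Fin n → ℝ | (∀ j, 0 < t j ∧ t j ≤ 1) ∧ StrictMono t}
      = {t : Fin n → ℝ | ∀ j, 0 < t j ∧ t j ≤ 1} ∩ {t : Fin n → ℝ | StrictMono t} := rfl
  rw [hEq]
  apply MeasurableSet.inter
  · have h1 : {t : Fin n → ℝ | ∀ j, 0 < t j ∧ t j ≤ 1}
        = ⋂ j, ({t : Fin n → ℝ | 0 < t j} ∩ {t : Fin n → ℝ | t j ≤ 1}) := by
      ext t; simp [Set.mem_iInter, forall_and]
    rw [h1]
    exact MeasurableSet.iInter fun j =>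
      (measurableSet_lt measurable_const (measurable_pi_apply j)).inter
        (measurableSet_le (measurable_pi_apply j) measurable_const)
  · have h2 : {t : Fin n → ℝ | StrictMono t}
        = ⋂ p : Fin n × Fin n, {t : Fin n → ℝ | p.1 < p.2 → t p.1 < t p.2} := by
      ext t
      simp only [Set.mem_iInter, Set.mem_setOf_eq]
      exact ⟨fun h p hp => h hp, fun h i j hij => h (i, j) hij⟩
    rw [h2]
    refine MeasurableSet.iInter fun p => ?_
    by_cases hp : p.1 < p.2
    · have : {t : Fin n → ℝ | p.1 < p.2 → t p.1 < t p.2} = {t | t p.1 < t p.2} := by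
        ext t; simp [hp]
      rw [this]
      exact measurableSet_lt (measurable_pi_apply _) (measurable_pi_apply _)
    · have : {t : Fin n → ℝ | p.1 < p.2 → t p.1 < t p.2} = Set.univ := by
        ext t; simp [hp]
      rw [this]
      exact MeasurableSet.univ

lemma measurable_rhoN (n : ℕ) : Measurable (rhoN n) := by
  unfold rhoN
  refine Measurable.mul ?_ ?_
  · have hEq : (fun q : (Fin n → ℝ) × (Fin n → ℝ) =>
        indi ((∀ j, 0 < q.1 j ∧ q.1 j ≤ 1) ∧ StrictMono q.1))
        = (Set.indicator {t : Fin n → ℝ | (∀ j, 0 < t j ∧ t j ≤ 1) ∧ StrictMono t}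
            (fun _ => (1 : ℝ))) ∘ Prod.fst := by
      funext q
      by_cases h : (∀ j, 0 < q.1 j ∧ q.1 j ≤ 1) ∧ StrictMono q.1 <;>
        simp [indi, h, Set.indicator]
    rw [hEq]
    exact (measurable_const.indicator (measurableSet_simplex n)).comp measurable_fst
  · exact Finset.measurable_prod _ fun j _ =>
      measurable_heatK_comp ((measurable_sub_prev j).comp measurable_fst)
        ((measurable_sub_prev j).comp measurable_snd)

lemma lintegral_fin_prod' {n : ℕ} (f : Fin n → ℝ → ℝ≥0∞) (hf : ∀ i, Measurable (f i)) :
    ∫⁻ x : Fin n → ℝ, ∏ i, f i (x i) = ∏ i, ∫⁻ u, f i u := by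
  induction n with
  | zero =>
    simp only [Finset.univ_eq_empty, Finset.prod_empty]
    rw [lintegral_const, volume_pi, Measure.pi_univ]
    simp
  | succ n ih =>
    have A := (measurePreserving_piFinSuccAbove (fun _ : Fin (n + 1) => (volume : Measure ℝ)) 0).symm
    calc ∫⁻ x : Fin (n + 1) → ℝ, ∏ i, f i (x i)
        = ∫⁻ p : ℝ × (Fin n → ℝ), f 0 p.1 * ∏ i : Fin n, f i.succ (p.2 i) := by
          rw [volume_pi, ← A.lintegral_comp_emb (MeasurableEquiv.measurableEmbedding _)]
          congr 1
          funext p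
          simp only [MeasurableEquiv.piFinSuccAbove_symm_apply, Fin.insertNthEquiv,
            Equiv.coe_fn_mk, Fin.insertNth_zero, Fin.prod_univ_succ, Fin.cons_zero, Fin.cons_succ,
            Fin.zero_succAbove, cast_eq]
      _ = (∫⁻ u, f 0 u) * ∫⁻ x : Fin n → ℝ, ∏ i : Fin n, f i.succ (x i) := by
          rw [Measure.volume_eq_prod]
          exact lintegral_prod_mul (hf 0).aemeasurable
            (Finset.measurable_prod _ fun (i : Fin n) _ =>
              (hf i.succ).comp (measurable_pi_apply i)).aemeasurable
      _ = ∏ i, ∫⁻ u, f i u := by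
          rw [ih (fun i => f i.succ) (fun i => hf i.succ), Fin.prod_univ_succ]

lemma measurePreserving_sub_prev (n : ℕ) :
    MeasurePreserving (fun t : Fin n → ℝ => fun j => t j - prev t j) volume volume := by
  classical
  set M : Matrix (Fin n) (Fin n) ℝ := fun j k =>
    (if k = j then (1 : ℝ) else 0) -
      (if j.1 ≠ 0 ∧ k = (⟨j.1 - 1, lt_of_le_of_lt (Nat.sub_le _ _) j.2⟩ : Fin n) then 1 else 0)
    with hMdef
  have happ : ∀ t : Fin n → ℝ, Matrix.toLin' M t = fun j => t j - prev t j := by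
    intro t; funext j
    rw [Matrix.toLin'_apply]
    show (M.mulVec t) j = _
    unfold Matrix.mulVec dotProduct
    simp only [hMdef, sub_mul, ite_mul, one_mul, zero_mul]
    rw [Finset.sum_sub_distrib]
    congr 1
    · rw [Finset.sum_ite_eq' Finset.univ j t]
      simp
    · by_cases h : j.1 = 0
      · rw [prev]
        simp [h]
      · simp only [ne_eq, h, not_false_eq_true, true_and]
        rw [Finset.sum_ite_eq' Finset.univ _ t]
        rw [prev]
        simp [h]
  have htri : M.BlockTriangular OrderDual.toDual := by
    intro i j hij
    have hij' : i < j := hij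
    simp only [hMdef]
    rw [if_neg, if_neg, sub_zero]
    · rintro ⟨-, rfl⟩
      have := hij'
      rw [Fin.lt_def] at this
      simp only at this
      omega
    · intro h
      exact absurd h.symm (Fin.ne_of_lt hij')
  have hdet : M.det = 1 := by
    rw [Matrix.det_of_lowerTriangular M htri]
    refine Finset.prod_eq_one fun j _ => ?_
    have h2 : ¬(j.1 ≠ 0 ∧ j = (⟨j.1 - 1, lt_of_le_of_lt (Nat.sub_le _ _) j.2⟩ : Fin n)) := by
      rintro ⟨hj0, hj⟩
      have := congrArg Fin.val hj
      simp only at this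
      omega
    simp only [hMdef, if_true]
    rw [if_neg h2, sub_zero]
  have hld : LinearMap.det (Matrix.toLin' M) = 1 := by
    rw [LinearMap.det_toLin']; exact hdet
  have hmp : MeasurePreserving (Matrix.toLin' M) (volume : Measure (Fin n → ℝ)) volume := by
    refine ⟨(LinearMap.continuous_on_pi _).measurable, ?_⟩
    rw [Real.map_linearMap_volume_pi_eq_smul_volume_pi (by rw [hld]; norm_num)]
    rw [hld]
    simp
  have hfa : (fun t : Fin n → ℝ => fun j => t j - prev t j) = ⇑(Matrix.toLin' M) :=
    funext fun t => (happ t).symm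
  rw [hfa]
  exact hmp

lemma heatK_sq (s : ℝ) (hs : 0 < s) :
    ∀ y : ℝ, heatK s y ^ 2 = Real.exp (-(1 / s) * y ^ 2) / (2 * π * s) := by
  intro y
  rw [heatK, div_pow, sq_sqrt (by positivity : (0 : ℝ) ≤ 2 * π * s), pow_two, ← Real.exp_add]
  congr 2
  field_simp
  ring

lemma integral_heatK_sq {s : ℝ} (hs : 0 < s) :
    ∫ y : ℝ, heatK s y ^ 2 = 1 / (2 * Real.sqrt (π * s)) := by
  simp_rw [heatK_sq s hs]
  rw [integral_div, integral_gaussian]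
  rw [show π / (1 / s) = π * s by field_simp]
  have h3 : 0 < Real.sqrt (π * s) := Real.sqrt_pos.2 (by positivity)
  have h4 : Real.sqrt (π * s) * Real.sqrt (π * s) = π * s :=
    Real.mul_self_sqrt (by positivity)
  rw [div_eq_div_iff (by positivity) (by positivity)]
  nlinarith [h4, h3, Real.pi_pos, hs]

lemma integrableOn_halfgauss_aux {l : ℝ} (hl : 0 < l) :
    IntegrableOn (fun u : ℝ => u ^ (-(2⁻¹) : ℝ) * Real.exp (-(l * u))) (Ioi 0) := by
  refine MeasureTheory.IntegrableOn.congr_fun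
    (integrableOn_rpow_mul_exp_neg_mul_rpow
      (show (-1 : ℝ) < -(2⁻¹) by norm_num) (show (0 : ℝ) < 1 by norm_num) hl)
    (fun x hx => ?_) measurableSet_Ioi
  rw [Real.rpow_one, neg_mul]

lemma integral_halfgauss {l : ℝ} (hl : 0 < l) :
    ∫ u in Ioi (0 : ℝ), Real.exp (-(l * u)) / (2 * Real.sqrt (π * u))
      = 1 / (2 * Real.sqrt l) := by
  have hπ : 0 < Real.sqrt π := Real.sqrt_pos.2 Real.pi_pos
  have hptw : ∀ u ∈ Ioi (0 : ℝ),
      Real.exp (-(l * u)) / (2 * Real.sqrt (π * u))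
        = (1 / (2 * Real.sqrt π)) * (u ^ ((1 : ℝ) / 2 - 1) * Real.exp (-(l * u))) := by
    intro u hu
    have hu0 : 0 < u := hu
    have hru : u ^ ((1 : ℝ) / 2 - 1) = (Real.sqrt u)⁻¹ := by
      rw [show ((1 : ℝ) / 2 - 1) = -(1 / 2) by norm_num, Real.rpow_neg hu0.le,
        ← Real.sqrt_eq_rpow]
    rw [hru, Real.sqrt_mul Real.pi_pos.le]
    have hsu : 0 < Real.sqrt u := Real.sqrt_pos.2 hu0
    field_simp
  rw [setIntegral_congr_fun measurableSet_Ioi hptw, integral_const_mul,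
    integral_rpow_mul_exp_neg_mul_Ioi (by norm_num : (0 : ℝ) < 1 / 2) hl,
    Real.Gamma_one_half_eq]
  have h5 : ((1 : ℝ) / l) ^ ((1 : ℝ) / 2) = (Real.sqrt l)⁻¹ := by
    rw [← Real.sqrt_eq_rpow, one_div, Real.sqrt_inv]
  rw [h5]
  have hsl : 0 < Real.sqrt l := Real.sqrt_pos.2 hl
  field_simp

/-- The one-step kernel in `ℝ≥0∞`. -/
def gE (l s y : ℝ) : ℝ≥0∞ :=
  ENNReal.ofReal (if 0 < s then heatK s y ^ 2 * Real.exp (-(l * s)) else 0)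

lemma measurable_gE_comp {α : Type*} [MeasurableSpace α] {l : ℝ} {f g : α → ℝ}
    (hf : Measurable f) (hg : Measurable g) :
    Measurable fun a => gE l (f a) (g a) := by
  unfold gE
  apply Measurable.ennreal_ofReal
  apply Measurable.ite
  · exact measurableSet_lt measurable_const hf
  · exact ((measurable_heatK_comp hf hg).pow_const 2).mul ((measurable_const.mul hf).neg.exp)
  · exact measurable_const

/-- `∫⁻ y, gE l s y`. -/
def kE (l s : ℝ) : ℝ≥0∞ := ∫⁻ y, gE l s y

lemma measurable_kE (l : ℝ) : Measurable (kE l) :=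
  Measurable.lintegral_prod_right (measurable_gE_comp measurable_fst measurable_snd)

lemma kE_eq (l : ℝ) (s : ℝ) :
    kE l s = ENNReal.ofReal
      (if 0 < s then Real.exp (-(l * s)) / (2 * Real.sqrt (π * s)) else 0) := by
  by_cases hs : 0 < s
  · simp only [kE, gE, hs, if_true]
    have hint : Integrable (fun y : ℝ => heatK s y ^ 2 * Real.exp (-(l * s))) := by
      apply Integrable.mul_const
      simp_rw [heatK_sq s hs]
      exact (integrable_exp_neg_mul_sq (by positivity : (0 : ℝ) < 1 / s)).div_const _
    rw [← ofReal_integral_eq_lintegral_ofReal hint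
      (ae_of_all _ fun y => mul_nonneg (sq_nonneg _) (Real.exp_pos _).le)]
    congr 1
    rw [integral_mul_const, integral_heatK_sq hs]
    ring
  · simp [kE, gE, hs]

lemma lintegral_kE {l : ℝ} (hl : 0 < l) :
    ∫⁻ s, kE l s = ENNReal.ofReal (1 / (2 * Real.sqrt l)) := by
  have h1 : kE l = (Ioi (0 : ℝ)).indicator
      (fun s => ENNReal.ofReal (Real.exp (-(l * s)) / (2 * Real.sqrt (π * s)))) := by
    funext s
    rw [kE_eq l s]
    by_cases hs : 0 < s <;> simp [Set.indicator, hs]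
  rw [h1, lintegral_indicator measurableSet_Ioi]
  have hint : IntegrableOn (fun s : ℝ => Real.exp (-(l * s)) / (2 * Real.sqrt (π * s)))
      (Ioi 0) := by
    have h2 := (integrableOn_halfgauss_aux hl).const_mul (1 / (2 * Real.sqrt π))
    refine MeasureTheory.IntegrableOn.congr_fun h2 (fun u hu => ?_) measurableSet_Ioi
    have hu0 : 0 < u := hu
    have hru : u ^ (-(2⁻¹) : ℝ) = (Real.sqrt u)⁻¹ := by
      rw [show (-(2⁻¹) : ℝ) = -(1 / 2) by norm_num, Real.rpow_neg hu0.le,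
        ← Real.sqrt_eq_rpow]
    rw [hru, Real.sqrt_mul Real.pi_pos.le]
    have hsu : 0 < Real.sqrt u := Real.sqrt_pos.2 hu0
    have hπ : 0 < Real.sqrt π := Real.sqrt_pos.2 Real.pi_pos
    field_simp
  rw [← ofReal_integral_eq_lintegral_ofReal hint
    (ae_of_all _ fun s => div_nonneg (Real.exp_pos _).le (by positivity))]
  rw [integral_halfgauss hl]

lemma lintegral_prod_gE (n : ℕ) {l : ℝ} (hl : 0 < l) :
    ∫⁻ q : (Fin n → ℝ) × (Fin n → ℝ),
        ∏ j, gE l (q.1 j - prev q.1 j) (q.2 j - prev q.2 j)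
      = ENNReal.ofReal (1 / (2 * Real.sqrt l)) ^ n := by
  have hmeas : Measurable fun q : (Fin n → ℝ) × (Fin n → ℝ) =>
      ∏ j, gE l (q.1 j - prev q.1 j) (q.2 j - prev q.2 j) :=
    Finset.measurable_prod _ fun j _ =>
      measurable_gE_comp ((measurable_sub_prev j).comp measurable_fst)
        ((measurable_sub_prev j).comp measurable_snd)
  rw [Measure.volume_eq_prod, lintegral_prod _ hmeas.aemeasurable]
  have hinner : ∀ t : Fin n → ℝ,
      (∫⁻ x : Fin n → ℝ, ∏ j, gE l (t j - prev t j) (x j - prev x j))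
        = ∏ j, kE l (t j - prev t j) := by
    intro t
    have hcomp := (measurePreserving_sub_prev n).lintegral_comp
      (f := fun u : Fin n → ℝ => ∏ j, gE l (t j - prev t j) (u j))
      (Finset.measurable_prod _ fun j _ =>
        measurable_gE_comp measurable_const (measurable_pi_apply j))
    calc (∫⁻ x : Fin n → ℝ, ∏ j, gE l (t j - prev t j) (x j - prev x j))
        = ∫⁻ u : Fin n → ℝ, ∏ j, gE l (t j - prev t j) (u j) := hcomp
      _ = ∏ j, ∫⁻ u : ℝ, gE l (t j - prev t j) u :=
          lintegral_fin_prod' _ (fun j =>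
            measurable_gE_comp measurable_const measurable_id)
      _ = ∏ j, kE l (t j - prev t j) := rfl
  simp_rw [hinner]
  have houter := (measurePreserving_sub_prev n).lintegral_comp
    (f := fun u : Fin n → ℝ => ∏ j, kE l (u j))
    (Finset.measurable_prod _ fun j _ => (measurable_kE l).comp (measurable_pi_apply j))
  calc (∫⁻ t : Fin n → ℝ, ∏ j, kE l (t j - prev t j))
      = ∫⁻ u : Fin n → ℝ, ∏ j, kE l (u j) := houter
    _ = ∏ _j : Fin n, ∫⁻ u : ℝ, kE l u := lintegral_fin_prod' _ (fun _ => measurable_kE l)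
    _ = ENNReal.ofReal (1 / (2 * Real.sqrt l)) ^ n := by
        rw [lintegral_kE hl, Finset.prod_const, Finset.card_univ, Fintype.card_fin]

lemma rhoN_sq_lintegral_le (n : ℕ) {l : ℝ} (hl : 1 ≤ l) :
    ∫⁻ q : (Fin n → ℝ) × (Fin n → ℝ), ENNReal.ofReal (rhoN n q ^ 2)
      ≤ ENNReal.ofReal (Real.exp l) * ENNReal.ofReal (1 / (2 * Real.sqrt l)) ^ n := by
  have hl0 : 0 < l := lt_of_lt_of_le one_pos hl
  have hpt : ∀ q : (Fin n → ℝ) × (Fin n → ℝ),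
      ENNReal.ofReal (rhoN n q ^ 2) ≤
        ENNReal.ofReal (Real.exp l) *
          ∏ j, gE l (q.1 j - prev q.1 j) (q.2 j - prev q.2 j) := by
    rintro ⟨t, x⟩
    by_cases hP : (∀ j, 0 < t j ∧ t j ≤ 1) ∧ StrictMono t
    · have hgap : ∀ j : Fin n, 0 < t j - prev t j := by
        intro j
        by_cases h : j.1 = 0
        · simp only [prev]
          rw [dif_pos h]
          simpa using (hP.1 j).1
        · simp only [prev]
          rw [dif_neg h]
          have hlt : (⟨j.1 - 1, lt_of_le_of_lt (Nat.sub_le _ _) j.2⟩ : Fin n) < j := by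
            rw [Fin.lt_def]
            simp only
            omega
          have := hP.2 hlt
          linarith
      have hsum : ∑ j, (t j - prev t j) ≤ 1 := sum_sub_prev_le t (fun j => (hP.1 j).2)
      have hrho : rhoN n (t, x) = ∏ j, heatK (t j - prev t j) (x j - prev x j) := by
        simp only [rhoN, indi]
        rw [if_pos hP, one_mul]
      have hreal : rhoN n (t, x) ^ 2 ≤ Real.exp l *
          ∏ j, (if 0 < t j - prev t j then
            heatK (t j - prev t j) (x j - prev x j) ^ 2 * Real.exp (-(l * (t j - prev t j)))
            else 0) := by
        rw [hrho, ← Finset.prod_pow]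
        have hprod : ∏ j, (if 0 < t j - prev t j then
            heatK (t j - prev t j) (x j - prev x j) ^ 2 * Real.exp (-(l * (t j - prev t j)))
            else 0)
            = (∏ j, heatK (t j - prev t j) (x j - prev x j) ^ 2) *
                Real.exp (-(l * ∑ j, (t j - prev t j))) := by
          rw [Finset.prod_congr rfl (fun j _ => if_pos (hgap j)), Finset.prod_mul_distrib]
          congr 1
          rw [← Real.exp_sum]
          congr 1
          rw [Finset.sum_neg_distrib, ← Finset.mul_sum]
        rw [hprod, ← mul_assoc, mul_comm (Real.exp l), mul_assoc, ← Real.exp_add]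
        have hexp : 1 ≤ Real.exp (l + -(l * ∑ j, (t j - prev t j))) := by
          rw [← Real.exp_zero]
          apply Real.exp_le_exp.2
          have : l * ∑ j, (t j - prev t j) ≤ l * 1 :=
            mul_le_mul_of_nonneg_left hsum hl0.le
          linarith
        nlinarith [Finset.prod_nonneg (fun j (_ : j ∈ Finset.univ) =>
          sq_nonneg (heatK (t j - prev t j) (x j - prev x j)))]
      calc ENNReal.ofReal (rhoN n (t, x) ^ 2)
          ≤ ENNReal.ofReal (Real.exp l *
            ∏ j, (if 0 < t j - prev t j then
              heatK (t j - prev t j) (x j - prev x j) ^ 2 * Real.exp (-(l * (t j - prev t j)))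
              else 0)) := ENNReal.ofReal_le_ofReal hreal
        _ = ENNReal.ofReal (Real.exp l) *
            ∏ j, gE l (t j - prev t j) (x j - prev x j) := by
            rw [ENNReal.ofReal_mul (Real.exp_pos _).le]
            congr 1
            rw [ENNReal.ofReal_prod_of_nonneg]
            · rfl
            · intro j _
              split
              · positivity
              · exact le_rfl
    · have hz : rhoN n (t, x) = 0 := by
        simp only [rhoN, indi]
        rw [if_neg hP, zero_mul]
      rw [hz]
      simp
  calc ∫⁻ q : (Fin n → ℝ) × (Fin n → ℝ), ENNReal.ofReal (rhoN n q ^ 2)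
      ≤ ∫⁻ q : (Fin n → ℝ) × (Fin n → ℝ), ENNReal.ofReal (Real.exp l) *
          ∏ j, gE l (q.1 j - prev q.1 j) (q.2 j - prev q.2 j) := lintegral_mono hpt
    _ = ENNReal.ofReal (Real.exp l) *
        ∫⁻ q : (Fin n → ℝ) × (Fin n → ℝ),
          ∏ j, gE l (q.1 j - prev q.1 j) (q.2 j - prev q.2 j) := by
        rw [lintegral_const_mul]
        exact Finset.measurable_prod _ fun j _ =>
          measurable_gE_comp ((measurable_sub_prev j).comp measurable_fst)
            ((measurable_sub_prev j).comp measurable_snd)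
    _ = ENNReal.ofReal (Real.exp l) * ENNReal.ofReal (1 / (2 * Real.sqrt l)) ^ n := by
        rw [lintegral_prod_gE n hl0]

lemma setIntegral_sq_le (n : ℕ) {l : ℝ} (hl : 1 ≤ l) {D : ℝ} (hD : 0 ≤ D)
    {f : (Fin n → ℝ) × (Fin n → ℝ) → ℝ} (hf : Measurable f)
    (hfb : ∀ q, f q ^ 2 ≤ D ^ n * rhoN n q ^ 2) :
    ∫ q in ((Set.univ.pi fun _ : Fin n => Set.Icc (0 : ℝ) 1) ×ˢ
        (Set.univ : Set (Fin n → ℝ))), f q ^ 2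
      ≤ D ^ n * (Real.exp l * (1 / (2 * Real.sqrt l)) ^ n) := by
  have hsl : 0 < Real.sqrt l := Real.sqrt_pos.2 (lt_of_lt_of_le one_pos hl)
  have h1 : ∫ q in ((Set.univ.pi fun _ : Fin n => Set.Icc (0 : ℝ) 1) ×ˢ
        (Set.univ : Set (Fin n → ℝ))), f q ^ 2
      = (∫⁻ q in ((Set.univ.pi fun _ : Fin n => Set.Icc (0 : ℝ) 1) ×ˢ
          (Set.univ : Set (Fin n → ℝ))), ENNReal.ofReal (f q ^ 2)).toReal :=
    integral_eq_lintegral_of_nonneg_ae (ae_of_all _ fun q => sq_nonneg _)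
      ((hf.pow_const 2).aestronglyMeasurable)
  rw [h1]
  apply ENNReal.toReal_le_of_le_ofReal (by positivity)
  calc (∫⁻ q in ((Set.univ.pi fun _ : Fin n => Set.Icc (0 : ℝ) 1) ×ˢ
          (Set.univ : Set (Fin n → ℝ))), ENNReal.ofReal (f q ^ 2))
      ≤ ∫⁻ q, ENNReal.ofReal (f q ^ 2) := setLIntegral_le_lintegral _ _
    _ ≤ ∫⁻ q, ENNReal.ofReal (D ^ n) * ENNReal.ofReal (rhoN n q ^ 2) := by
        refine lintegral_mono fun q => ?_
        rw [← ENNReal.ofReal_mul (by positivity)]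
        exact ENNReal.ofReal_le_ofReal (hfb q)
    _ = ENNReal.ofReal (D ^ n) * ∫⁻ q, ENNReal.ofReal (rhoN n q ^ 2) :=
        lintegral_const_mul _ ((measurable_rhoN n).pow_const 2).ennreal_ofReal
    _ ≤ ENNReal.ofReal (D ^ n) *
        (ENNReal.ofReal (Real.exp l) * ENNReal.ofReal (1 / (2 * Real.sqrt l)) ^ n) :=
        mul_le_mul_right (rhoN_sq_lintegral_le n hl) _
    _ = ENNReal.ofReal (D ^ n * (Real.exp l * (1 / (2 * Real.sqrt l)) ^ n)) := by
        rw [← ENNReal.ofReal_pow (by positivity), ← ENNReal.ofReal_mul (Real.exp_pos _).le,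
          ← ENNReal.ofReal_mul (by positivity)]

end Statement7Aux


/-- For every bounded measurable `a : [0,1] × ℝ → ℝ`, the series
`∑_{n≥1} ‖a^{⊗n} ϱ_n‖₂²` converges; in particular `∑_{n≥1} β^{2n} ‖ϱ_n‖₂² < ∞` for every
`β ≥ 0`. -/
theorem statement7 (a : ℝ × ℝ → ℝ) (hameas : Measurable a) (C : ℝ) (ha : ∀ q, |a q| ≤ C) :
    Summable (fun n : ℕ =>
      ∫ q in ((Set.univ.pi fun _ : Fin (n + 1) => Set.Icc (0 : ℝ) 1) ×ˢ
          (Set.univ : Set (Fin (n + 1) → ℝ))),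
        ((∏ j, a (q.1 j, q.2 j)) * rhoN (n + 1) q) ^ 2)
    ∧ ∀ β : ℝ, 0 ≤ β →
      Summable (fun n : ℕ => β ^ (2 * (n + 1)) *
        ∫ q in ((Set.univ.pi fun _ : Fin (n + 1) => Set.Icc (0 : ℝ) 1) ×ˢ
            (Set.univ : Set (Fin (n + 1) → ℝ))), (rhoN (n + 1) q) ^ 2) := by
  have hSmeas : ∀ n : ℕ, MeasurableSet ((Set.univ.pi fun _ : Fin n => Set.Icc (0 : ℝ) 1) ×ˢ
      (Set.univ : Set (Fin n → ℝ))) := fun n =>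
    (MeasurableSet.univ_pi fun _ => measurableSet_Icc).prod MeasurableSet.univ
  have hgeom : ∀ (D : ℝ), 1 ≤ D → ∀ n : ℕ,
      D ^ (n + 1) * (Real.exp (max 1 (D ^ 2)) *
        (1 / (2 * Real.sqrt (max 1 (D ^ 2)))) ^ (n + 1))
      ≤ Real.exp (max 1 (D ^ 2)) * (1 / 2) ^ n := by
    intro D hD n
    set l : ℝ := max 1 (D ^ 2) with hldef
    have hl1 : (1 : ℝ) ≤ l := le_max_left _ _
    have hl0 : (0 : ℝ) < l := lt_of_lt_of_le one_pos hl1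
    have hsl : 0 < Real.sqrt l := Real.sqrt_pos.2 hl0
    have hD0 : (0 : ℝ) < D := lt_of_lt_of_le one_pos hD
    have hDsl : D ≤ Real.sqrt l := by
      have h1 : Real.sqrt (D ^ 2) ≤ Real.sqrt l := Real.sqrt_le_sqrt (le_max_right _ _)
      rwa [Real.sqrt_sq hD0.le] at h1
    have hbase : D * (1 / (2 * Real.sqrt l)) ≤ 1 / 2 := by
      rw [mul_one_div, div_le_div_iff₀ (by positivity) (by norm_num)]
      nlinarith
    calc D ^ (n + 1) * (Real.exp l * (1 / (2 * Real.sqrt l)) ^ (n + 1))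
        = Real.exp l * (D * (1 / (2 * Real.sqrt l))) ^ (n + 1) := by
          rw [mul_pow]; ring
      _ ≤ Real.exp l * (1 / 2) ^ (n + 1) := by
          apply mul_le_mul_of_nonneg_left _ (Real.exp_pos _).le
          exact pow_le_pow_left₀ (by positivity) hbase _
      _ ≤ Real.exp l * (1 / 2) ^ n := by
          apply mul_le_mul_of_nonneg_left _ (Real.exp_pos _).le
          exact pow_le_pow_of_le_one (by norm_num) (by norm_num) (Nat.le_succ n)
  constructor
  · -- first part
    have hC0 : 0 ≤ C := le_trans (abs_nonneg _) (ha (0, 0))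
    set D : ℝ := (max C 1) ^ 2 with hDdef
    have hD1 : (1 : ℝ) ≤ D := by
      have h1 : (1 : ℝ) ≤ max C 1 := le_max_right C 1
      nlinarith
    set l : ℝ := max 1 (D ^ 2) with hldef
    have hl1 : (1 : ℝ) ≤ l := le_max_left _ _
    refine Summable.of_nonneg_of_le
      (fun n => setIntegral_nonneg (hSmeas (n + 1)) fun q _ => sq_nonneg _)
      (fun n => ?_) (summable_geometric_two.mul_left (Real.exp l))
    have hfmeas : Measurable fun q : (Fin (n + 1) → ℝ) × (Fin (n + 1) → ℝ) =>
        (∏ j, a (q.1 j, q.2 j)) * rhoN (n + 1) q :=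
      (Finset.measurable_prod _ fun j _ => hameas.comp
        (((measurable_pi_apply j).comp measurable_fst).prodMk
          ((measurable_pi_apply j).comp measurable_snd))).mul (measurable_rhoN (n + 1))
    have hfb : ∀ q : (Fin (n + 1) → ℝ) × (Fin (n + 1) → ℝ),
        ((∏ j, a (q.1 j, q.2 j)) * rhoN (n + 1) q) ^ 2
          ≤ D ^ (n + 1) * rhoN (n + 1) q ^ 2 := by
      intro q
      rw [mul_pow]
      apply mul_le_mul_of_nonneg_right _ (sq_nonneg _)
      calc (∏ j, a (q.1 j, q.2 j)) ^ 2 = ∏ j, a (q.1 j, q.2 j) ^ 2 := by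
            rw [Finset.prod_pow]
        _ ≤ ∏ _j : Fin (n + 1), D := by
            refine Finset.prod_le_prod (fun j _ => sq_nonneg _) fun j _ => ?_
            rw [hDdef, ← sq_abs]
            exact pow_le_pow_left₀ (abs_nonneg _) ((ha _).trans (le_max_left C 1)) 2
        _ = D ^ (n + 1) := by
            rw [Finset.prod_const, Finset.card_univ, Fintype.card_fin]
    calc ∫ q in ((Set.univ.pi fun _ : Fin (n + 1) => Set.Icc (0 : ℝ) 1) ×ˢ
            (Set.univ : Set (Fin (n + 1) → ℝ))),
          ((∏ j, a (q.1 j, q.2 j)) * rhoN (n + 1) q) ^ 2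
        ≤ D ^ (n + 1) * (Real.exp l * (1 / (2 * Real.sqrt l)) ^ (n + 1)) :=
          setIntegral_sq_le (n + 1) hl1 (by positivity) hfmeas hfb
      _ ≤ Real.exp l * (1 / 2) ^ n := hgeom D hD1 n
  · -- second part
    intro β hβ
    set D : ℝ := (max β 1) ^ 2 with hDdef
    have hD1 : (1 : ℝ) ≤ D := by
      have h1 : (1 : ℝ) ≤ max β 1 := le_max_right β 1
      nlinarith
    set l : ℝ := max 1 (D ^ 2) with hldef
    have hl1 : (1 : ℝ) ≤ l := le_max_left _ _
    have hl0 : (0 : ℝ) < l := lt_of_lt_of_le one_pos hl1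
    refine Summable.of_nonneg_of_le
      (fun n => mul_nonneg (pow_nonneg hβ _)
        (setIntegral_nonneg (hSmeas (n + 1)) fun q _ => sq_nonneg _))
      (fun n => ?_) (summable_geometric_two.mul_left (Real.exp l))
    have hint : ∫ q in ((Set.univ.pi fun _ : Fin (n + 1) => Set.Icc (0 : ℝ) 1) ×ˢ
          (Set.univ : Set (Fin (n + 1) → ℝ))), (rhoN (n + 1) q) ^ 2
        ≤ Real.exp l * (1 / (2 * Real.sqrt l)) ^ (n + 1) := by
      have h := setIntegral_sq_le (n + 1) hl1 zero_le_one
        (measurable_rhoN (n + 1)) (f := rhoN (n + 1)) (D := 1)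
        (fun q => by rw [one_pow, one_mul])
      simpa using h
    have hβD : β ^ (2 * (n + 1)) ≤ D ^ (n + 1) := by
      rw [pow_mul]
      refine pow_le_pow_left₀ (sq_nonneg β) ?_ (n + 1)
      rw [hDdef]
      exact pow_le_pow_left₀ hβ (le_max_left β 1) 2
    calc β ^ (2 * (n + 1)) *
          ∫ q in ((Set.univ.pi fun _ : Fin (n + 1) => Set.Icc (0 : ℝ) 1) ×ˢ
            (Set.univ : Set (Fin (n + 1) → ℝ))), (rhoN (n + 1) q) ^ 2
        ≤ D ^ (n + 1) * (Real.exp l * (1 / (2 * Real.sqrt l)) ^ (n + 1)) := by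
          apply mul_le_mul hβD hint
          · exact setIntegral_nonneg (hSmeas (n + 1)) fun q _ => sq_nonneg _
          · positivity
      _ ≤ Real.exp l * (1 / 2) ^ n := hgeom D hD1 n
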